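/- Let E be an exact couple system over a bounded poset I, and let b ≥ p ≥ q ≥ z and b' ≥ p' ≥ q' ≥ z' in I with z = p' and q = b'. Let d : S^{pz}_{bq} → S^{p'z'}_{b'q'} be the homomorphism characterized by: d sends the class of x ∈ ker(d_{pqz}) to the class of j_{p',q'}(i_{z,p'}(y)) for any y ∈ D_z with i_{z,q}(y) = k_{p,q}(x). Since q' ≤ p' = z, one has ker(d_{pqq'}) ⊆ ker(d_{pqz}), so S^{p,q'}_{b,q} := ker(d_{pqq'})/im(d_{bpq}) is a subgroup of S^{pz}_{bq}. Then this subgroup equals ker(d). -/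

import Mathlib

open Function

universe u v

/-- An exact couple system over a bounded poset `I`: abelian groups `E^p_q` for `q ≤ p`,
functorial maps `ℓ`, boundary maps `k_{pq} : E^p_q → D_q` (where `D_p := E^p_⊥`), exact
triangles `D_q → D_p → E^p_q → D_q`, and naturality of `k`. -/
structure ExactCoupleSystem (I : Type u) [PartialOrder I] [BoundedOrder I] where
  /-- the abelian groups `E^p_q` -/
  E : ∀ p q : I, q ≤ p → AddCommGrpCat.{v}
  /-- the structure maps `ℓ : E^p_q → E^{p'}_{q'}` for `p ≤ p'`, `q ≤ q'` -/
  l : ∀ {p q p' q' : I} (h : q ≤ p) (h' : q' ≤ p'), p ≤ p' → q ≤ q' →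
      (E p q h →+ E p' q' h')
  /-- the boundary maps `k_{pq} : E^p_q → D_q` -/
  k : ∀ {p q : I} (h : q ≤ p), (E p q h →+ E q ⊥ bot_le)
  l_id : ∀ {p q : I} (h : q ≤ p), l h h le_rfl le_rfl = AddMonoidHom.id _
  l_comp : ∀ {p q p' q' p'' q'' : I} (h : q ≤ p) (h' : q' ≤ p') (h'' : q'' ≤ p'')
      (hp : p ≤ p') (hq : q ≤ q') (hp' : p' ≤ p'') (hq' : q' ≤ q''),
      (l h' h'' hp' hq').comp (l h h' hp hq) = l h h'' (hp.trans hp') (hq.trans hq')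
  exact_ij : ∀ {p q : I} (h : q ≤ p),
      (l (bot_le : (⊥ : I) ≤ q) (bot_le : (⊥ : I) ≤ p) h le_rfl).range =
        (l (bot_le : (⊥ : I) ≤ p) h le_rfl bot_le).ker
  exact_jk : ∀ {p q : I} (h : q ≤ p),
      (l (bot_le : (⊥ : I) ≤ p) h le_rfl bot_le).range = (k h).ker
  exact_ki : ∀ {p q : I} (h : q ≤ p),
      (k h).range = (l (bot_le : (⊥ : I) ≤ q) (bot_le : (⊥ : I) ≤ p) h le_rfl).ker
  k_nat : ∀ {p q p' q' : I} (h : q ≤ p) (h' : q' ≤ p') (hp : p ≤ p') (hq : q ≤ q'),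
      (l (bot_le : (⊥ : I) ≤ q) (bot_le : (⊥ : I) ≤ q') hq le_rfl).comp (k h) =
        (k h').comp (l h h' hp hq)

namespace ExactCoupleSystem

variable {I : Type u} [PartialOrder I] [BoundedOrder I] (X : ExactCoupleSystem.{u, v} I)

/-- `D_p := E^p_{−∞}`. -/
abbrev D (p : I) := X.E p ⊥ bot_le

/-- `i_{qp} : D_q → D_p`. -/
def i {q p : I} (h : q ≤ p) : X.D q →+ X.D p := X.l bot_le bot_le h le_rfl

/-- `j_{pq} : D_p → E^p_q`. -/
def j {q p : I} (h : q ≤ p) : X.D p →+ X.E p q h := X.l bot_le h le_rfl bot_le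

/-- The differential `d_{pqz} = j_{qz} ∘ k_{pq} : E^p_q → E^q_z`. -/
def dd {z q p : I} (hzq : z ≤ q) (hqp : q ≤ p) : X.E p q hqp →+ X.E q z hzq :=
  (X.j hzq).comp (X.k hqp)

/-- The S-term `S^{pz}_{bq} = ker(d_{pqz}) / im(d_{bpq})` of an exact couple system. -/
abbrev Sterm {z q p b : I} (hzq : z ≤ q) (hqp : q ≤ p) (hpb : p ≤ b) :=
  ↥(X.dd hzq hqp).ker ⧸ (X.dd hqp hpb).range.addSubgroupOf (X.dd hzq hqp).ker

/-- The class in `S^{pz}_{bq}` of an element `x ∈ ker(d_{pqz})`. -/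
def Scls {z q p b : I} (hzq : z ≤ q) (hqp : q ≤ p) (hpb : p ≤ b)
    {x : X.E p q hqp} (hx : x ∈ (X.dd hzq hqp).ker) : X.Sterm hzq hqp hpb :=
  QuotientAddGroup.mk ⟨x, hx⟩

lemma k_j {q p : I} (h : q ≤ p) (d : X.D p) : X.k h (X.j h d) = 0 := by
  have hmem : X.j h d ∈ (X.k h).ker := by
    rw [← X.exact_jk h]; exact ⟨d, rfl⟩
  exact hmem

lemma j_i {q p : I} (h : q ≤ p) (d : X.D q) : X.j h (X.i h d) = 0 := by
  have hmem : X.i h d ∈ (X.l (bot_le : (⊥ : I) ≤ p) h le_rfl bot_le).ker := by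
    rw [← X.exact_ij h]; exact ⟨d, rfl⟩
  exact hmem

lemma i_k {q p : I} (h : q ≤ p) (e : X.E p q h) : X.i h (X.k h e) = 0 := by
  have hmem : X.k h e ∈ (X.l (bot_le : (⊥ : I) ≤ q) (bot_le : (⊥ : I) ≤ p) h le_rfl).ker := by
    rw [← X.exact_ki h]; exact ⟨e, rfl⟩
  exact hmem

lemma i_i {z q p : I} (h1 : z ≤ q) (h2 : q ≤ p) (d : X.D z) :
    X.i h2 (X.i h1 d) = X.i (h1.trans h2) d := by
  have := X.l_comp (bot_le : (⊥ : I) ≤ z) (bot_le : (⊥ : I) ≤ q) (bot_le : (⊥ : I) ≤ p)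
    h1 le_rfl h2 le_rfl
  exact DFunLike.congr_fun this d

lemma i_rfl {p : I} (h : p ≤ p) (d : X.D p) : X.i h d = d := by
  rw [i, X.l_id]; rfl

lemma j_factor {q' p' q : I} (hq'p' : q' ≤ p') (hp'q : p' ≤ q) (d : X.D q) :
    X.j hp'q d = X.l (hq'p'.trans hp'q) hp'q le_rfl hq'p' (X.j (hq'p'.trans hp'q) d) := by
  have := X.l_comp (bot_le : (⊥ : I) ≤ q) (hq'p'.trans hp'q) hp'q le_rfl bot_le le_rfl hq'p'
  exact (DFunLike.congr_fun this d).symm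

end ExactCoupleSystem

/-- Kernel of the differential: with `z = p'` and `q = b'`, for the
differential `d : S^{pz}_{bq} → S^{p'z'}_{b'q'}` (characterized as in Statement 11),
one has `ker(d_{pqq'}) ⊆ ker(d_{pqz})`, and the subgroup
`S^{p,q'}_{b,q} = ker(d_{pqq'})/im(d_{bpq})` of `S^{pz}_{bq}` equals `ker(d)`. -/
theorem statement12 {I : Type u} [PartialOrder I] [BoundedOrder I]
    (X : ExactCoupleSystem.{u, v} I) {z' q' p' q p b : I}
    (hz'q' : z' ≤ q') (hq'p' : q' ≤ p') (hp'q : p' ≤ q) (hqp : q ≤ p) (hpb : p ≤ b) :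
    (X.dd (hq'p'.trans hp'q) hqp).ker ≤ (X.dd hp'q hqp).ker ∧
    ∀ Dh : X.Sterm hp'q hqp hpb →+ X.Sterm hz'q' hq'p' hp'q,
      (∀ (x : X.E p q hqp) (hx : x ∈ (X.dd hp'q hqp).ker)
        (y : X.D p') (_ : X.i hp'q y = X.k hqp x)
        (hmem : X.j hq'p' (X.i (le_refl p') y) ∈ (X.dd hz'q' hq'p').ker),
        Dh (X.Scls hp'q hqp hpb hx) = X.Scls hz'q' hq'p' hp'q hmem) →
      Dh.ker = ((X.dd (hq'p'.trans hp'q) hqp).ker.addSubgroupOf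
          (X.dd hp'q hqp).ker).map
        (QuotientAddGroup.mk' ((X.dd hqp hpb).range.addSubgroupOf
          (X.dd hp'q hqp).ker)) := by
  have hq'q : q' ≤ q := hq'p'.trans hp'q
  have hsub : (X.dd hq'q hqp).ker ≤ (X.dd hp'q hqp).ker := by
    intro x hx
    have hx0 : X.j (hq'p'.trans hp'q) (X.k hqp x) = 0 := hx
    show X.dd hp'q hqp x = 0
    show X.j hp'q (X.k hqp x) = 0
    rw [X.j_factor hq'p' hp'q, hx0, map_zero]
  refine ⟨hsub, ?_⟩
  intro Dh hDh
  ext c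
  obtain ⟨⟨x, hx⟩, rfl⟩ := QuotientAddGroup.mk'_surjective _ c
  constructor
  · intro hc
    have hc0 : Dh (QuotientAddGroup.mk' _ ⟨x, hx⟩) = 0 := hc
    -- get y with i y = k x
    have hker : X.k hqp x ∈
        (X.l (bot_le : (⊥ : I) ≤ p') (bot_le : (⊥ : I) ≤ q) hp'q le_rfl).range := by
      rw [X.exact_ij hp'q]; exact hx
    obtain ⟨y, hy⟩ := hker
    have hy' : X.i hp'q y = X.k hqp x := hy
    have hmem : X.j hq'p' (X.i (le_refl p') y) ∈ (X.dd hz'q' hq'p').ker := by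
      show X.j hz'q' (X.k hq'p' (X.j hq'p' (X.i (le_refl p') y))) = 0
      rw [X.k_j, map_zero]
    have heq := hDh x hx y hy' hmem
    have hScls : X.Scls hz'q' hq'p' hp'q hmem = 0 := by
      rw [← heq]; exact hc0
    have hN : (⟨X.j hq'p' (X.i (le_refl p') y), hmem⟩ : (X.dd hz'q' hq'p').ker) ∈
        (X.dd hq'p' hp'q).range.addSubgroupOf (X.dd hz'q' hq'p').ker :=
      (QuotientAddGroup.eq_zero_iff _).mp hScls
    have hN' : X.j hq'p' y ∈ (X.dd hq'p' hp'q).range := by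
      have := hN
      rw [AddSubgroup.mem_addSubgroupOf] at this
      simpa [X.i_rfl] using this
    obtain ⟨e, he⟩ := hN'
    have hsubker : y - X.k hp'q e ∈
        (X.l (bot_le : (⊥ : I) ≤ q') (bot_le : (⊥ : I) ≤ p') hq'p' le_rfl).range := by
      rw [X.exact_ij hq'p']
      show X.j hq'p' (y - X.k hp'q e) = 0
      have he' : X.j hq'p' (X.k hp'q e) = X.j hq'p' y := he
      rw [map_sub, he', sub_self]
    obtain ⟨w, hw⟩ := hsubker
    have hw' : X.i hq'p' w = y - X.k hp'q e := hw
    have hkx : X.k hqp x = X.i (hq'p'.trans hp'q) w := by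
      rw [← hy']
      have hy2 : y = X.i hq'p' w + X.k hp'q e := by rw [hw']; abel
      rw [hy2, map_add, X.i_i, X.i_k, add_zero]
    refine ⟨⟨x, hx⟩, ?_, rfl⟩
    simp only [SetLike.mem_coe, AddSubgroup.mem_addSubgroupOf]
    show X.j (hq'p'.trans hp'q) (X.k hqp x) = 0
    rw [hkx, X.j_i]
  · rintro ⟨⟨x', hx'⟩, hB, heq⟩
    show Dh _ = 0
    rw [← heq]
    simp only [SetLike.mem_coe, AddSubgroup.mem_addSubgroupOf] at hB
    have hB0 : X.j (hq'p'.trans hp'q) (X.k hqp x') = 0 := hB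
    have hker : X.k hqp x' ∈
        (X.l (bot_le : (⊥ : I) ≤ q') (bot_le : (⊥ : I) ≤ q) (hq'p'.trans hp'q) le_rfl).range := by
      rw [X.exact_ij (hq'p'.trans hp'q)]; exact hB0
    obtain ⟨w, hw⟩ := hker
    have hw' : X.i (hq'p'.trans hp'q) w = X.k hqp x' := hw
    have hy : X.i hp'q (X.i hq'p' w) = X.k hqp x' := by rw [X.i_i]; exact hw'
    have hmem : X.j hq'p' (X.i (le_refl p') (X.i hq'p' w)) ∈ (X.dd hz'q' hq'p').ker := by
      show X.j hz'q' (X.k hq'p' (X.j hq'p' (X.i (le_refl p') (X.i hq'p' w)))) = 0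
      rw [X.k_j, map_zero]
    have heq2 := hDh x' hx' (X.i hq'p' w) hy hmem
    have hval : X.j hq'p' (X.i (le_refl p') (X.i hq'p' w)) = 0 := by
      rw [X.i_rfl, X.j_i]
    have : X.Scls hz'q' hq'p' hp'q hmem = 0 := by
      refine (QuotientAddGroup.eq_zero_iff _).mpr ?_
      rw [show (⟨X.j hq'p' (X.i (le_refl p') (X.i hq'p' w)), hmem⟩ :
          (X.dd hz'q' hq'p').ker) = 0 from Subtype.ext hval]
      exact zero_mem _
    show Dh (QuotientAddGroup.mk' _ ⟨x', hx'⟩) = 0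
    rw [show (QuotientAddGroup.mk' ((X.dd hqp hpb).range.addSubgroupOf
        (X.dd hp'q hqp).ker) ⟨x', hx'⟩ : X.Sterm hp'q hqp hpb) =
        X.Scls hp'q hqp hpb hx' from rfl, heq2, this]
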